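/- If x is in the ring of integers of Q(√5) with x^2 - 1 = 2^a u for a unit u and a ≥ 2, then (after replacing x by -x if necessary) x + 1 = 2^{a-1} u_1 and x - 1 = 2 u_2 for some units u_1, u_2 with u = u_1 u_2. -/
import Mathlib

open Polynomial

/-- The ring of integers `ℤ[ε]` of `ℚ(√5)`, with `ε = (1+√5)/2` a root of `X² - X - 1`. -/
noncomputable abbrev GoldRing : Type := AdjoinRoot (X ^ 2 - X - 1 : ℤ[X])

private noncomputable abbrev fZ : ℤ[X] := X ^ 2 - X - 1

private lemma fZ_monic : fZ.Monic := by
  have h : fZ = X ^ 2 - (X + 1) := by unfold fZ; ring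
  rw [h]
  apply monic_X_pow_sub
  apply lt_of_le_of_lt (b := 1) (by compute_degree) (by norm_num)

private lemma fZ_natDegree : fZ.natDegree = 2 := by
  unfold fZ; compute_degree!

private noncomputable def g2 : (ZMod 2)[X] := fZ.map (Int.castRingHom (ZMod 2))

private lemma g2_irred : Irreducible g2 := by
  have hm : g2.Monic := fZ_monic.map _
  have hd : g2.natDegree = 2 := by
    rw [g2, fZ_monic.natDegree_map, fZ_natDegree]
  by_contra hcon
  obtain ⟨c₁, c₂, h0, h1⟩ := (hm.not_irreducible_iff_exists_add_mul_eq_coeff hd).mp hcon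
  have c0 : fZ.coeff 0 = -1 := by simp [fZ]
  have c1 : fZ.coeff 1 = -1 := by simp [fZ, coeff_one]
  have e0 : g2.coeff 0 = 1 := by rw [g2, coeff_map, c0]; decide
  have e1 : g2.coeff 1 = 1 := by rw [g2, coeff_map, c1]; decide
  rw [e0] at h0; rw [e1] at h1
  revert h0 h1; revert c₁ c₂; decide

private lemma fZ_irred : Irreducible fZ :=
  fZ_monic.irreducible_of_irreducible_map _ _ g2_irred

private instance : Fact (Irreducible g2) := ⟨g2_irred⟩

private noncomputable instance : IsDomain GoldRing :=
  AdjoinRoot.isDomain_of_prime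
    (show Prime fZ from (UniqueFactorizationMonoid.irreducible_iff_prime).mp fZ_irred)

private noncomputable def phi : GoldRing →+* AdjoinRoot g2 :=
  AdjoinRoot.lift ((algebraMap (ZMod 2) (AdjoinRoot g2)).comp (Int.castRingHom (ZMod 2)))
    (AdjoinRoot.root g2) (by
      rw [show (X ^ 2 - X - 1 : ℤ[X]) = fZ from rfl, ← Polynomial.eval₂_map,
        ← aeval_def, AdjoinRoot.aeval_eq, ← g2, AdjoinRoot.mk_self])

private lemma phi_mk (p : ℤ[X]) :
    phi (AdjoinRoot.mk fZ p) = AdjoinRoot.mk g2 (p.map (Int.castRingHom (ZMod 2))) := by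
  rw [phi, AdjoinRoot.lift_mk, ← AdjoinRoot.aeval_eq, aeval_def, Polynomial.eval₂_map]

private lemma phi_two : phi 2 = 0 := by
  rw [map_ofNat]
  have h := map_ofNat (algebraMap (ZMod 2) (AdjoinRoot g2)) 2
  rw [← h, show ((2 : ZMod 2) = 0) from rfl, map_zero]

private lemma dvd_iff_phi_eq_zero (z : GoldRing) : (2 : GoldRing) ∣ z ↔ phi z = 0 := by
  constructor
  · rintro ⟨w, rfl⟩
    rw [map_mul, phi_two, zero_mul]
  · intro hz
    obtain ⟨p, rfl⟩ := AdjoinRoot.mk_surjective z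
    rw [phi_mk, AdjoinRoot.mk_eq_zero] at hz
    obtain ⟨q, hq⟩ := hz
    obtain ⟨q', rfl⟩ := Polynomial.map_surjective (Int.castRingHom (ZMod 2)) (fun y => ZMod.intCast_surjective y) q
    have hzero : (p - fZ * q').map (Int.castRingHom (ZMod 2)) = 0 := by
      rw [Polynomial.map_sub, Polynomial.map_mul, hq, g2]; ring
    have hcoeff : ∀ n, (2 : ℤ) ∣ (p - fZ * q').coeff n := by
      intro n
      have := congrArg (fun r => Polynomial.coeff r n) hzero
      simp only [coeff_map, coeff_zero] at this
      exact_mod_cast (ZMod.intCast_zmod_eq_zero_iff_dvd _ 2).mp this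
    obtain ⟨r, hr⟩ := (Polynomial.C_dvd_iff_dvd_coeff 2 _).mpr hcoeff
    have hC : (C 2 : ℤ[X]) = 2 := map_ofNat C 2
    rw [hC] at hr
    refine ⟨AdjoinRoot.mk fZ r, ?_⟩
    have hp : p = fZ * q' + 2 * r := by linear_combination hr
    rw [hp, map_add, map_mul, map_mul, AdjoinRoot.mk_self, zero_mul, zero_add, map_ofNat]

private lemma prime_two : Prime (2 : GoldRing) := by
  refine ⟨?_, ?_, ?_⟩
  · intro h20
    have hinj := AdjoinRoot.of.injective_of_degree_ne_zero (f := fZ) (by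
      rw [Polynomial.degree_eq_natDegree fZ_monic.ne_zero, fZ_natDegree]; decide)
    have h02 : (AdjoinRoot.of fZ) 2 = (AdjoinRoot.of fZ) 0 := by
      rw [map_ofNat, map_zero, h20]
    have := hinj h02
    norm_num at this
  · intro hunit
    obtain ⟨v, hv⟩ := isUnit_iff_exists_inv.mp hunit
    have := congrArg phi hv
    rw [map_mul, phi_two, zero_mul, map_one] at this
    exact zero_ne_one this
  · intro b c hbc
    have : phi b * phi c = 0 := by
      rw [← map_mul]
      exact (dvd_iff_phi_eq_zero _).mp hbc
    rcases mul_eq_zero.mp this with h | h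
    · exact Or.inl ((dvd_iff_phi_eq_zero _).mpr h)
    · exact Or.inr ((dvd_iff_phi_eq_zero _).mpr h)

theorem factorization_of_sq_sub_one (a : ℕ) (x u : GoldRing)
    (ha : 2 ≤ a) (hu : IsUnit u) (h : x ^ 2 - 1 = 2 ^ a * u) :
    ∃ y : GoldRing, (y = x ∨ y = -x) ∧
      ∃ u₁ u₂ : GoldRing, IsUnit u₁ ∧ IsUnit u₂ ∧
        y + 1 = 2 ^ (a - 1) * u₁ ∧ y - 1 = 2 * u₂ ∧ u = u₁ * u₂ := by
  have h2 := prime_two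
  have h2ne : (2 : GoldRing) ≠ 0 := h2.ne_zero
  have h1 : (x - 1) * (x + 1) = 2 ^ a * u := by linear_combination h
  have hdvd : (2 : GoldRing) ∣ (x - 1) * (x + 1) := by
    rw [h1]
    exact Dvd.dvd.mul_right (dvd_pow_self 2 (by omega)) u
  have hboth : (2 : GoldRing) ∣ (x - 1) ∧ (2 : GoldRing) ∣ (x + 1) := by
    rcases h2.2.2 _ _ hdvd with hd | hd
    · exact ⟨hd, by obtain ⟨t, ht⟩ := hd; exact ⟨t + 1, by linear_combination ht⟩⟩
    · exact ⟨by obtain ⟨s, hs⟩ := hd; exact ⟨s - 1, by linear_combination hs⟩, hd⟩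
  obtain ⟨⟨t, ht⟩, ⟨s, hs⟩⟩ := hboth
  have hpowa : (2 : GoldRing) ^ 2 * 2 ^ (a - 2) = 2 ^ a := by
    rw [← pow_add]; congr 1; omega
  have hts : t * s = 2 ^ (a - 2) * u := by
    have h4 : (2 : GoldRing) ^ 2 * (t * s) = 2 ^ 2 * (2 ^ (a - 2) * u) := by
      have e1 : (2 : GoldRing) ^ 2 * (t * s) = (2 * t) * (2 * s) := by ring
      rw [e1, ← ht, ← hs, h1, ← mul_assoc, hpowa]
    exact mul_left_cancel₀ (pow_ne_zero 2 h2ne) h4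
  have hst1 : s - t = 1 := by
    have he : (2 : GoldRing) * (s - t) = 2 * 1 := by
      rw [mul_sub, ← hs, ← ht]; ring
    exact mul_left_cancel₀ h2ne he
  have hpow : (2 : GoldRing) ^ (a - 2) ∣ t * s := ⟨u, hts⟩
  have hpowne : (2 : GoldRing) ^ (a - 2) ≠ 0 := pow_ne_zero _ h2ne
  have hsplit : 2 * 2 ^ (a - 2) = (2 : GoldRing) ^ (a - 1) := by
    rw [← pow_succ']; congr 1; omega
  by_cases hdt : (2 : GoldRing) ∣ t
  · -- then ¬ 2 ∣ s, so 2^(a-2) ∣ t, use y = -x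
    have hds : ¬ (2 : GoldRing) ∣ s := by
      intro hds
      exact h2.not_unit (isUnit_of_dvd_one (hst1 ▸ dvd_sub hds hdt))
    have hdvdt : (2 : GoldRing) ^ (a - 2) ∣ t := by
      exact h2.pow_dvd_of_dvd_mul_left _ hds (by rwa [mul_comm] at hpow)
    obtain ⟨t', ht'⟩ := hdvdt
    have hu' : t' * s = u := by
      refine mul_left_cancel₀ hpowne ?_
      rw [← hts, ht']; ring
    have hut' : IsUnit t' := isUnit_of_mul_isUnit_left (hu' ▸ hu)
    have hus : IsUnit s := isUnit_of_mul_isUnit_right (hu' ▸ hu)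
    refine ⟨-x, Or.inr rfl, -t', -s, hut'.neg, hus.neg, ?_, ?_, ?_⟩
    · rw [show -x + 1 = -(x - 1) by ring, ht, ht', ← mul_assoc, hsplit]; ring
    · rw [show -x - 1 = -(x + 1) by ring, hs]; ring
    · rw [← hu']; ring
  · -- 2^(a-2) ∣ s, use y = x
    have hdvds : (2 : GoldRing) ^ (a - 2) ∣ s := h2.pow_dvd_of_dvd_mul_left _ hdt hpow
    obtain ⟨s', hs'⟩ := hdvds
    have hu' : t * s' = u := by
      refine mul_left_cancel₀ hpowne ?_
      rw [← hts, hs']; ring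
    have hut : IsUnit t := isUnit_of_mul_isUnit_left (hu' ▸ hu)
    have hus' : IsUnit s' := isUnit_of_mul_isUnit_right (hu' ▸ hu)
    refine ⟨x, Or.inl rfl, s', t, hus', hut, ?_, ?_, ?_⟩
    · rw [hs, hs', ← mul_assoc, hsplit]
    · exact ht
    · rw [← hu']; ring
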